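/- Let m = 2^a for some a ≥ 1 and let A be a partial cyclic pair set in ℤ/m. Then A has exactly one maximal point. -/

import Mathlib

/-- Lexicographic comparison of sets of naturals: `S ≤ T` iff `S = T` or the least
element of the symmetric difference `S Δ T` lies in `T`. -/
def LexLE (S T : Set ℕ) : Prop :=
  S = T ∨ ∃ i : ℕ, i ∈ T ∧ i ∉ S ∧ ∀ j < i, (j ∈ S ↔ j ∈ T)

/-- The restriction `A|_[x,x+r)` of `A ⊆ ℤ/m` to the length-`r` interval starting
at `x`, viewed as a subset of `{0, …, r−1}`. -/
def restrictSet (m : ℕ) (A : Set (ZMod m)) (x : ZMod m) (r : ℕ) : Set ℕ :=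
  { i | i < r ∧ x + (i : ZMod m) ∈ A }

/-- `x` is an `r`-maximal point of `A`: `A|_[x,x+r)` is lexicographically maximal
among all `A|_[y,y+r)`.  A point is maximal when it is `m`-maximal. -/
def IsMaxPt (m : ℕ) (A : Set (ZMod m)) (r : ℕ) (x : ZMod m) : Prop :=
  ∀ y : ZMod m, LexLE (restrictSet m A y r) (restrictSet m A x r)

/-- `x` is an `r`-minimal point of `A`: `A|_[x,x+r)` is lexicographically minimal
among all `A|_[y,y+r)`. -/
def IsMinPt (m : ℕ) (A : Set (ZMod m)) (r : ℕ) (x : ZMod m) : Prop :=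
  ∀ y : ZMod m, LexLE (restrictSet m A x r) (restrictSet m A y r)

/-- The opposite point of `x` in `ℤ/m` (for `m` even): `x + m/2`. -/
def Opp (m : ℕ) (x : ZMod m) : ZMod m := x + ((m / 2 : ℕ) : ZMod m)

/-- A (full cyclic) pair set: a subset of `ℤ/m` containing exactly one point of each
opposite pair `{x, x + m/2}`. -/
def IsPairSet (m : ℕ) (A : Set (ZMod m)) : Prop :=
  ∀ x : ZMod m, Xor' (x ∈ A) (Opp m x ∈ A)

/-- A partial cyclic pair set: a nonempty subset of `ℤ/m` containing at most one point
of each opposite pair. -/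
def IsPartialPairSet (m : ℕ) (A : Set (ZMod m)) : Prop :=
  A.Nonempty ∧ ∀ x : ZMod m, ¬(x ∈ A ∧ Opp m x ∈ A)

/-- A free point of a partial cyclic pair set `A`: neither it nor its opposite point
belongs to `A`. -/
def IsFreePt (m : ℕ) (A : Set (ZMod m)) (x : ZMod m) : Prop :=
  x ∉ A ∧ Opp m x ∉ A

open Classical in
lemma lexle_total (S T : Set ℕ) : LexLE S T ∨ LexLE T S := by
  by_cases h : S = T
  · exact Or.inl (Or.inl h)
  have hne : ∃ i, ¬(i ∈ S ↔ i ∈ T) := by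
    by_contra hc
    push_neg at hc
    exact h (Set.ext fun i => hc i)
  classical
  let i := Nat.find hne
  have hspec : ¬(i ∈ S ↔ i ∈ T) := Nat.find_spec hne
  have hmin : ∀ j < i, (j ∈ S ↔ j ∈ T) := fun j hj =>
    not_not.mp (Nat.find_min hne hj)
  by_cases hT : i ∈ T
  · have hS : i ∉ S := fun hS => hspec ⟨fun _ => hT, fun _ => hS⟩
    exact Or.inl (Or.inr ⟨i, hT, hS, hmin⟩)
  · have hS : i ∈ S := by
      by_contra hS
      exact hspec ⟨fun h' => absurd h' hS, fun h' => absurd h' hT⟩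
    exact Or.inr (Or.inr ⟨i, hS, hT, fun j hj => (hmin j hj).symm⟩)

lemma lexle_antisymm {S T : Set ℕ} (h1 : LexLE S T) (h2 : LexLE T S) : S = T := by
  rcases h1 with h1 | ⟨i, hiT, hiS, hi⟩
  · exact h1
  rcases h2 with h2 | ⟨j, hjS, hjT, hj⟩
  · exact h2.symm
  rcases lt_trichotomy i j with h | h | h
  · exact absurd ((hj i h).mp hiT) hiS
  · exact absurd (h ▸ hiT) hjT
  · exact absurd ((hi j h).mp hjS) hjT

lemma lexle_trans {S T U : Set ℕ} (h1 : LexLE S T) (h2 : LexLE T U) : LexLE S U := by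
  rcases h1 with rfl | ⟨i, hiT, hiS, hi⟩
  · exact h2
  rcases h2 with rfl | ⟨j, hjU, hjT, hj⟩
  · exact Or.inr ⟨i, hiT, hiS, hi⟩
  rcases lt_trichotomy i j with h | h | h
  · exact Or.inr ⟨i, (hj i h).mp hiT, hiS, fun k hk => (hi k hk).trans (hj k (hk.trans h))⟩
  · subst h
    exact Or.inr ⟨i, hjU, hiS, fun k hk => (hi k hk).trans (hj k hk)⟩
  · refine Or.inr ⟨j, hjU, fun hjS' => hjT ((hi j h).mp hjS'), fun k hk => (hi k (hk.trans h)).trans (hj k hk)⟩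

lemma lexle_refl (S : Set ℕ) : LexLE S S := Or.inl rfl

lemma exists_greatest {α : Type*} (r : α → α → Prop)
    (total : ∀ a b, r a b ∨ r b a)
    (trans : ∀ a b c, r a b → r b c → r a c) :
    ∀ s : Finset α, s.Nonempty → ∃ x ∈ s, ∀ y ∈ s, r y x := by
  intro s
  induction s using Finset.cons_induction with
  | empty => simp
  | cons b t hb ih =>
    intro _
    rcases t.eq_empty_or_nonempty with rfl | ht
    · refine ⟨b, by simp, fun y hy => ?_⟩
      simp only [Finset.cons_empty, Finset.mem_singleton] at hy
      subst hy
      rcases total y y with h | h <;> exact h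
    · obtain ⟨x, hxt, hx⟩ := ih ht
      rcases total b x with h | h
      · refine ⟨x, Finset.mem_cons_of_mem hxt, fun y hy => ?_⟩
        rcases Finset.mem_cons.mp hy with rfl | hy
        · exact h
        · exact hx y hy
      · refine ⟨b, Finset.mem_cons_self b t, fun y hy => ?_⟩
        rcases Finset.mem_cons.mp hy with rfl | hy
        · rcases total y y with h' | h' <;> exact h'
        · exact trans y x b (hx y hy) h

lemma exists_mul_eq (a : ℕ) (ha : 1 ≤ a) (d : ZMod (2^a)) (hd : d ≠ 0) :
    ∃ c : ZMod (2^a), c * d = ((2^(a-1) : ℕ) : ZMod (2^a)) := by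
  haveI : NeZero (2^a) := ⟨pow_ne_zero a two_ne_zero⟩
  set n := d.val with hn
  have hn0 : n ≠ 0 := fun h => hd (by rwa [← ZMod.val_eq_zero])
  set v := n.factorization 2 with hv
  set u := n / 2^v with hu
  have hnu : 2^v * u = n := Nat.ordProj_mul_ordCompl_eq_self n 2
  have hcop : Nat.Coprime 2 u := Nat.coprime_ordCompl Nat.prime_two hn0
  have hcop' : Nat.Coprime u (2^a) := (Nat.Coprime.pow_right a hcop.symm)
  have hunit : IsUnit ((u : ℕ) : ZMod (2^a)) := (ZMod.isUnit_iff_coprime u (2^a)).mpr hcop'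
  obtain ⟨w, hw⟩ := hunit.exists_left_inv
  have hvle : v ≤ a - 1 := by
    have h1 : 2^v ∣ n := Nat.ordProj_dvd n 2
    have h2 : 2^v ≤ n := Nat.le_of_dvd (Nat.pos_of_ne_zero hn0) h1
    have h3 : n < 2^a := ZMod.val_lt d
    have : v < a := by
      by_contra hc
      push_neg at hc
      exact absurd (lt_of_le_of_lt h2 h3) (not_lt.mpr (Nat.pow_le_pow_right (by norm_num) hc))
    omega
  have hdcast : ((n : ℕ) : ZMod (2^a)) = d := by
    rw [hn, ZMod.natCast_val, ZMod.cast_id]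
  refine ⟨(2:ZMod (2^a))^(a-1-v) * w, ?_⟩
  have hd2 : d = (2:ZMod (2^a))^v * (u : ZMod (2^a)) := by
    rw [← hdcast, ← hnu]
    push_cast
    ring
  rw [hd2]
  have : (2:ZMod (2^a))^(a-1-v) * w * ((2:ZMod (2^a))^v * u) =
      ((2:ZMod (2^a))^(a-1-v) * (2:ZMod (2^a))^v) * (w * u) := by ring
  rw [this, hw, mul_one, ← pow_add, Nat.sub_add_cancel hvle]
  push_cast
  ring

lemma myTranslateZero (a : ℕ) (ha : 1 ≤ a) (A : Set (ZMod (2^a)))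
    (hA : IsPartialPairSet (2^a) A) (d : ZMod (2^a))
    (hd : ∀ z, z ∈ A ↔ z + d ∈ A) : d = 0 := by
  by_contra hd0
  obtain ⟨c, hc⟩ := exists_mul_eq a ha d hd0
  haveI : NeZero (2^a) := ⟨pow_ne_zero a two_ne_zero⟩
  have hk : ∀ k : ℕ, ∀ z, z ∈ A ↔ z + k • d ∈ A := by
    intro k
    induction k with
    | zero => simp
    | succ n ih =>
      intro z
      rw [ih z, hd (z + n • d), succ_nsmul, add_assoc]
  have key : ∀ z, z ∈ A ↔ z + ((2^(a-1) : ℕ) : ZMod (2^a)) ∈ A := by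
    intro z
    have h := hk c.val z
    rwa [nsmul_eq_mul, ZMod.natCast_val, ZMod.cast_id, hc] at h
  obtain ⟨z, hz⟩ := hA.1
  have h2 : (2^a) / 2 = 2^(a-1) := by
    have h3 : 2^a = 2^(a-1) * 2 := by
      rw [← pow_succ]
      congr 1
      omega
    rw [h3, Nat.mul_div_cancel _ (by norm_num)]
  have hopp : Opp (2^a) z ∈ A := by
    unfold Opp
    rw [h2]
    exact (key z).mp hz
  exact hA.2 z ⟨hz, hopp⟩

theorem statement14 (a : ℕ) (ha : 1 ≤ a) (A : Set (ZMod (2 ^ a)))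
    (hA : IsPartialPairSet (2 ^ a) A) :
    ∃! x : ZMod (2 ^ a), IsMaxPt (2 ^ a) A (2 ^ a) x := by
  haveI : NeZero (2^a) := ⟨pow_ne_zero a two_ne_zero⟩
  obtain ⟨x, -, hx⟩ := exists_greatest
    (fun u v => LexLE (restrictSet (2^a) A u (2^a)) (restrictSet (2^a) A v (2^a)))
    (fun u v => lexle_total _ _) (fun u v w h1 h2 => lexle_trans h1 h2)
    Finset.univ Finset.univ_nonempty
  refine ⟨x, fun y => hx y (Finset.mem_univ y), fun y hy => ?_⟩
  have heq : restrictSet (2^a) A y (2^a) = restrictSet (2^a) A x (2^a) :=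
    lexle_antisymm (hx y (Finset.mem_univ y)) (hy x)
  have htr : ∀ z : ZMod (2^a), z ∈ A ↔ z + (x - y) ∈ A := by
    intro z
    set i := (z - y).val with hi
    have hic : ((i : ℕ) : ZMod (2^a)) = z - y := by rw [hi, ZMod.natCast_val, ZMod.cast_id]
    have hilt : i < 2^a := ZMod.val_lt _
    have hy1 : y + ((i : ℕ) : ZMod (2^a)) = z := by rw [hic]; ring
    have hx1 : x + ((i : ℕ) : ZMod (2^a)) = z + (x - y) := by rw [hic]; ring
    have h1 : z ∈ A ↔ i ∈ restrictSet (2^a) A y (2^a) := by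
      simp only [restrictSet, Set.mem_setOf_eq, hy1]
      exact ⟨fun h => ⟨hilt, h⟩, fun h => h.2⟩
    have h2 : i ∈ restrictSet (2^a) A x (2^a) ↔ z + (x - y) ∈ A := by
      simp only [restrictSet, Set.mem_setOf_eq, hx1]
      exact ⟨fun h => h.2, fun h => ⟨hilt, h⟩⟩
    rw [h1, heq, h2]
  have hd := myTranslateZero a ha A hA (x - y) htr
  have : x = y := by
    have := sub_eq_zero.mp hd
    exact this
  exact this.symm
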